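/- arXiv:2411.03525 — 5 statements merged into one kernel-verified Lean document; each statement's English description precedes it below -/
import Mathlib

section
/- Let p, m ≥ 1 be natural numbers and q_1,…,q_m integers each coprime to p. For every k ∈ {0,1,…,p−1} and every n ∈ ℕ, the number of congruence-lattice points of 1-norm k+np satisfies N_𝓛(k+np) = Σ_{t=0}^{m−1} Σ_{U ⊆ M} binom(n−t+|U|−1, m−1) · γ(U, k+tp), where binom(a,b) denotes the binomial coefficient 'a choose b', understood to be 0 whenever a < b or a < 0 (with a = n−t+|U|−1 computed in ℤ). -/
/-- `OmegaSet p q U k` is the set `Ω(U,k)` of integer vectors supported on `U`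
satisfying the congruence `∑ i ∈ U, q i * x i ≡ 0 (mod p)` with 1-norm `k`. -/
def OmegaSet (p : ℕ) {m : ℕ} (q : Fin m → ℤ) (U : Finset (Fin m)) (k : ℕ) :
    Set (Fin m → ℤ) :=
  {x | (∀ i, i ∉ U → x i = 0) ∧ (p : ℤ) ∣ ∑ i ∈ U, q i * x i ∧
    ∑ i ∈ U, (x i).natAbs = k}

/-- `CSet p q U k` is the set `C(U,k)` of points of `Ω(U,k)` with all coordinates
of absolute value less than `p`. -/
def CSet (p : ℕ) {m : ℕ} (q : Fin m → ℤ) (U : Finset (Fin m)) (k : ℕ) :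
    Set (Fin m → ℤ) :=
  {x ∈ OmegaSet p q U k | ∀ i ∈ U, |x i| < (p : ℤ)}

/-- `OmegaN p q N k n` is the set `Ω_N(k+np)` of points of `Ω(M,k+np)` whose
coordinate `x i` is a negative multiple of `p` exactly when `i ∈ N`. -/
def OmegaN (p : ℕ) {m : ℕ} (q : Fin m → ℤ) (N : Finset (Fin m)) (k n : ℕ) :
    Set (Fin m → ℤ) :=
  {x ∈ OmegaSet p q Finset.univ (k + n * p) |
    ∀ i, (x i < 0 ∧ (p : ℤ) ∣ x i) ↔ i ∈ N}

/-- The signed reduction `x̄` of an integer modulo `p`: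
`x mod p` if `x ≥ 0` and `(x mod p) - p` if `x < 0`. -/
def sred (p : ℕ) (x : ℤ) : ℤ := if 0 ≤ x then x % (p : ℤ) else x % (p : ℤ) - p

/-- Binomial coefficient `a choose b` with upper argument in `ℤ`,
equal to `0` when `a < 0` (and, via `Nat.choose`, when `a < b`). -/
def ibinom (a : ℤ) (b : ℕ) : ℕ := if 0 ≤ a then a.toNat.choose b else 0

open Finset

/-! ### auxiliary -/

section Aux

variable {p m : ℕ} {q : Fin m → ℤ}

/-- The encoding map. -/
def phiE (p : ℕ) {m : ℕ} (U : Finset (Fin m)) (cw : (Fin m → ℤ) × (Fin m → ℕ)) :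
    Fin m → ℤ := fun i =>
  if i ∈ U then
    (if cw.1 i < 0 then cw.1 i - (p : ℤ) * cw.2 i else cw.1 i + (p : ℤ) * cw.2 i)
  else -((p : ℤ) * (cw.2 i + 1))

lemma omegaSet_finite (p : ℕ) {m : ℕ} (q : Fin m → ℤ) (U : Finset (Fin m)) (K : ℕ) :
    (OmegaSet p q U K).Finite := by
  apply Set.Finite.subset (Set.finite_Icc (fun _ : Fin m => -(K : ℤ)) (fun _ => (K : ℤ)))
  intro x hx
  obtain ⟨hsupp, -, hnorm⟩ := hx
  rw [Set.mem_Icc]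
  have hbound : ∀ i, (x i).natAbs ≤ K := by
    intro i
    by_cases hi : i ∈ U
    · exact hnorm ▸ Finset.single_le_sum (f := fun j => (x j).natAbs)
        (fun j _ => Nat.zero_le _) hi
    · simp [hsupp i hi]
  constructor <;> intro i <;> have := hbound i <;> simp only [Pi.neg_apply] <;> omega

lemma cset_finite (p : ℕ) {m : ℕ} (q : Fin m → ℤ) (U : Finset (Fin m)) (K : ℕ) :
    (CSet p q U K).Finite :=
  (omegaSet_finite p q U K).subset (Set.sep_subset _ _)

/-- `CSet` as a `Finset`. -/
noncomputable def CFin (p : ℕ) {m : ℕ} (q : Fin m → ℤ) (U : Finset (Fin m)) (K : ℕ) :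
    Finset (Fin m → ℤ) := (cset_finite p q U K).toFinset

lemma mem_CFin {U : Finset (Fin m)} {K : ℕ} {x : Fin m → ℤ} :
    x ∈ CFin p q U K ↔ x ∈ CSet p q U K := Set.Finite.mem_toFinset _

/-- the finset of `w`'s. -/
noncomputable def WFin (m t u n : ℕ) : Finset (Fin m → ℕ) :=
  if t + m ≤ n + u then (Finset.univ : Finset (Fin m)).piAntidiag (n + u - (t + m)) else ∅

lemma mem_WFin {t u n : ℕ} {w : Fin m → ℕ} :
    w ∈ WFin m t u n ↔ (∑ i, w i) + (t + m) = n + u := by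
  unfold WFin
  split_ifs with h
  · rw [Finset.mem_piAntidiag]
    constructor
    · rintro ⟨h1, -⟩
      have h1' : (∑ i, w i) = n + u - (t + m) := h1
      omega
    · intro h1
      refine ⟨?_, fun i _ => Finset.mem_univ i⟩
      show (∑ i, w i) = n + u - (t + m)
      omega
  · simp only [Finset.notMem_empty, false_iff]
    intro h1; omega

lemma card_piAntidiag_aux {ι : Type*} [DecidableEq ι] (s : Finset ι) (n : ℕ) :
    (s.piAntidiag n).card =
      if s.Nonempty then (n + s.card - 1).choose n else if n = 0 then 1 else 0 := by
  induction s using Finset.cons_induction generalizing n with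
  | empty =>
    simp only [Finset.not_nonempty_empty, if_false, Finset.piAntidiag_empty]
    split_ifs <;> simp
  | cons i s hi ih =>
    rw [Finset.piAntidiag_cons hi n, Finset.card_disjiUnion]
    simp only [Finset.card_map]
    rw [Finset.Nat.sum_antidiagonal_eq_sum_range_succ_mk]
    rcases s.eq_empty_or_nonempty with rfl | hs'
    · simp only [ih, Finset.not_nonempty_empty, if_false]
      rw [Finset.sum_range_succ]
      simp only [Nat.sub_self, if_pos rfl]
      have h0 : ∀ j ∈ Finset.range n, (if n - j = 0 then 1 else 0) = 0 := by
        intro j hj; rw [Finset.mem_range] at hj; rw [if_neg (by omega)]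
      rw [Finset.sum_congr rfl h0]
      rw [if_pos (Finset.cons_nonempty hi)]; simp
    · have hc : 1 ≤ s.card := Finset.card_pos.mpr hs'
      simp only [ih, if_pos hs']
      have h1 : ∀ j ∈ Finset.range (n+1),
          (n - j + s.card - 1).choose (n - j) = ((n - j) + (s.card - 1)).choose (s.card - 1) := by
        intro j hj
        rw [show n - j + s.card - 1 = (n - j) + (s.card - 1) by omega, Nat.choose_symm_add]
      rw [Finset.sum_congr rfl h1]
      have h2 := Finset.sum_range_reflect (fun b => (b + (s.card - 1)).choose (s.card - 1)) (n+1)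
      simp only [Nat.add_sub_cancel] at h2
      rw [h2, Nat.sum_range_add_choose n (s.card - 1)]
      rw [if_pos (Finset.cons_nonempty hi)]
      rw [Finset.card_cons]
      rw [show n + (s.card + 1) - 1 = n + s.card by omega,
        show n + (s.card - 1) + 1 = n + s.card by omega,
        show s.card - 1 + 1 = s.card by omega]
      exact (Nat.choose_symm_add).symm

lemma card_WFin (hm : 1 ≤ m) (t u n : ℕ) :
    (WFin m t u n).card = ibinom ((n : ℤ) - (t : ℤ) + (u : ℤ) - 1) (m - 1) := by
  have hmpos : 0 < m := hm
  haveI : Nonempty (Fin m) := Fin.pos_iff_nonempty.mp hmpos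
  unfold WFin ibinom
  split_ifs with h h2 h3
  · -- t + m ≤ n + u and 0 ≤ n - t + u - 1
    rw [card_piAntidiag_aux]
    rw [if_pos Finset.univ_nonempty]
    rw [Finset.card_univ, Fintype.card_fin]
    set N := n + u - (t + m) with hN
    have hz : ((n : ℤ) - t + u - 1).toNat = N + m - 1 := by omega
    rw [hz, show n + u - (t + m) + m - 1 = N + m - 1 by omega]
    rw [← Nat.choose_symm (show m - 1 ≤ N + m - 1 by omega)]
    congr 1
    omega
  · exfalso; omega
  · -- ¬(t + m ≤ n + u), 0 ≤ n - t + u - 1 : choose = 0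
    rw [Finset.card_empty, eq_comm]
    exact Nat.choose_eq_zero_of_lt (by omega)
  · rw [Finset.card_empty]

end Aux

section Phi

variable {p m : ℕ} {q : Fin m → ℤ}

lemma phiE_natAbs {U : Finset (Fin m)} (c : Fin m → ℤ) (w : Fin m → ℕ) (i : Fin m) :
    (phiE p U (c, w) i).natAbs = if i ∈ U then (c i).natAbs + p * w i else p * (w i + 1) := by
  unfold phiE
  dsimp only
  have hcast : ((p * w i : ℕ) : ℤ) = (p : ℤ) * (w i : ℤ) := by push_cast; ring
  have hcast2 : ((p * (w i + 1) : ℕ) : ℤ) = (p : ℤ) * ((w i : ℤ) + 1) := by push_cast; ring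
  split_ifs with h1 h2 <;> omega

lemma sum_natAbs_phiE {U : Finset (Fin m)} (c : Fin m → ℤ) (w : Fin m → ℕ) :
    ∑ i, (phiE p U (c, w) i).natAbs
      = (∑ i ∈ U, (c i).natAbs) + p * (∑ i, w i) + p * (m - U.card) := by
  classical
  have hsplit : ∑ i, (phiE p U (c, w) i).natAbs
      = (∑ i ∈ U, ((c i).natAbs + p * w i)) + ∑ i ∈ Uᶜ, p * (w i + 1) := by
    rw [← Finset.sum_add_sum_compl U]
    congr 1
    · exact Finset.sum_congr rfl fun i hi => by rw [phiE_natAbs, if_pos hi]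
    · exact Finset.sum_congr rfl fun i hi => by
        rw [phiE_natAbs, if_neg (Finset.mem_compl.mp hi)]
  have hA : ∑ i ∈ U, ((c i).natAbs + p * w i)
      = (∑ i ∈ U, (c i).natAbs) + p * ∑ i ∈ U, w i := by
    rw [Finset.sum_add_distrib, Finset.mul_sum]
  have h2 : ∑ i ∈ Uᶜ, p * (w i + 1) = (∑ i ∈ Uᶜ, p * w i) + Uᶜ.card * p := by
    simp only [Nat.mul_add, mul_one, Finset.sum_add_distrib, Finset.sum_const, smul_eq_mul]
  have h2b : (∑ i ∈ Uᶜ, p * w i) = p * ∑ i ∈ Uᶜ, w i := (Finset.mul_sum _ _ _).symm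
  have h2c : Uᶜ.card * p = p * Uᶜ.card := Nat.mul_comm _ _
  have h3 : Uᶜ.card = m - U.card := by
    rw [Finset.card_compl, Fintype.card_fin]
  have h4 : p * (∑ i ∈ U, w i) + p * (∑ i ∈ Uᶜ, w i) = p * ∑ i, w i := by
    rw [← Nat.mul_add, Finset.sum_add_sum_compl]
  rw [hsplit, hA, h2, h2b, h2c, h3]
  omega

lemma dvd_sum_phiE_sub {U : Finset (Fin m)} (q : Fin m → ℤ) (c : Fin m → ℤ) (w : Fin m → ℕ) :
    (p : ℤ) ∣ (∑ i, q i * phiE p U (c, w) i) - ∑ i ∈ U, q i * c i := by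
  have hr : (∑ i, q i * phiE p U (c, w) i) - ∑ i ∈ U, q i * c i
      = ∑ i, (q i * phiE p U (c, w) i - if i ∈ U then q i * c i else 0) := by
    rw [Finset.sum_sub_distrib]
    congr 1
    rw [Finset.sum_ite_mem, Finset.univ_inter]
  rw [hr]
  apply Finset.dvd_sum
  intro i _
  unfold phiE
  dsimp only
  by_cases h1 : i ∈ U
  · rw [if_pos h1, if_pos h1]
    split_ifs with h2
    · exact ⟨-(q i * (w i : ℤ)), by push_cast; ring⟩
    · exact ⟨q i * (w i : ℤ), by push_cast; ring⟩
  · rw [if_neg h1, if_neg h1]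
    exact ⟨-(q i * ((w i : ℤ) + 1)), by push_cast; ring⟩

lemma phiE_neg_dvd_iff (hp : 0 < p) {U : Finset (Fin m)} {c : Fin m → ℤ} {w : Fin m → ℕ}
    (hlt : ∀ i ∈ U, |c i| < (p : ℤ)) (i : Fin m) :
    (phiE p U (c, w) i < 0 ∧ (p : ℤ) ∣ phiE p U (c, w) i) ↔ i ∉ U := by
  have hpz : (0 : ℤ) < p := by exact_mod_cast hp
  unfold phiE
  dsimp only
  by_cases hi : i ∈ U
  · rw [if_pos hi]
    simp only [hi, not_true_eq_false, iff_false, not_and]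
    rcases lt_or_ge (c i) 0 with hc | hc
    · rw [if_pos hc]
      intro hneg hdvd
      have h3 : (p : ℤ) ∣ (p : ℤ) * (w i : ℤ) := ⟨(w i : ℤ), rfl⟩
      have h2 : (p : ℤ) ∣ c i := by
        have := dvd_add hdvd h3
        rwa [sub_add_cancel] at this
      have h4 : c i = 0 := Int.eq_zero_of_abs_lt_dvd h2 (hlt i hi)
      omega
    · rw [if_neg (not_lt.mpr hc)]
      intro hneg
      have : (0 : ℤ) ≤ (p : ℤ) * (w i : ℤ) := by positivity
      omega
  · rw [if_neg hi]
    simp only [hi, not_false_eq_true, iff_true]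
    constructor
    · have : (0 : ℤ) < (p : ℤ) * ((w i : ℤ) + 1) := by positivity
      omega
    · exact ⟨-((w i : ℤ) + 1), by ring⟩

lemma sred_phiE (hp : 0 < p) {U : Finset (Fin m)} {c : Fin m → ℤ} {w : Fin m → ℕ}
    (hlt : ∀ i ∈ U, |c i| < (p : ℤ)) {i : Fin m} (hi : i ∈ U) :
    sred p (phiE p U (c, w) i) = c i := by
  have hpz : (0 : ℤ) < p := by exact_mod_cast hp
  have habs := hlt i hi
  rw [abs_lt] at habs
  obtain ⟨habs1, habs2⟩ := habs
  unfold phiE sred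
  dsimp only
  rw [if_pos hi]
  have hw : (0 : ℤ) ≤ (p : ℤ) * (w i : ℤ) := by positivity
  by_cases hc : c i < 0
  · rw [if_pos hc]
    rw [if_neg (not_le.mpr (by linarith : c i - (p : ℤ) * (w i : ℤ) < 0))]
    have e1 : (c i - (p : ℤ) * (w i : ℤ)) % p = c i % p := by
      rw [show c i - (p : ℤ) * (w i : ℤ) = c i + (p : ℤ) * (-(w i : ℤ)) by ring,
        Int.add_mul_emod_self_left]
    have e2 : c i % p = c i + p := by
      conv_lhs => rw [show c i = (c i + p) + (p : ℤ) * (-1) by ring, Int.add_mul_emod_self_left]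
      exact Int.emod_eq_of_lt (by linarith) (by linarith)
    rw [e1, e2]; ring
  · rw [if_neg hc]
    rw [if_pos (by push_neg at hc; linarith : (0 : ℤ) ≤ c i + (p : ℤ) * (w i : ℤ))]
    rw [Int.add_mul_emod_self_left]
    exact Int.emod_eq_of_lt (not_lt.mp hc) habs2

lemma abs_sred_lt (hp : 0 < p) {x : ℤ} (h : ¬(x < 0 ∧ (p : ℤ) ∣ x)) : |sred p x| < p := by
  have hpz : (0 : ℤ) < p := by exact_mod_cast hp
  have h1 := Int.emod_nonneg x (ne_of_gt hpz)
  have h2 := Int.emod_lt_of_pos x hpz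
  unfold sred
  split_ifs with hx
  · rw [abs_lt]; omega
  · push_neg at h
    have hnd := h (by omega)
    have h3 : x % p ≠ 0 := fun hc => hnd (Int.dvd_of_emod_eq_zero hc)
    rw [abs_lt]; omega

lemma phiE_decomp (hp : 0 < p) (x : Fin m → ℤ) :
    phiE p (Finset.univ.filter (fun i => ¬(x i < 0 ∧ (p : ℤ) ∣ x i)))
      (fun i => if i ∈ Finset.univ.filter (fun j => ¬(x j < 0 ∧ (p : ℤ) ∣ x j))
          then sred p (x i) else 0,
        fun i => (if 0 ≤ x i then x i / p else -(x i / p) - 1).toNat) = x := by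
  classical
  have hpz : (0 : ℤ) < p := by exact_mod_cast hp
  funext i
  unfold phiE sred
  simp only [Finset.mem_filter, Finset.mem_univ, true_and]
  have hed := Int.emod_add_mul_ediv (x i) (p : ℤ)
  have h1 := Int.emod_nonneg (x i) (ne_of_gt hpz)
  have h2 := Int.emod_lt_of_pos (x i) hpz
  by_cases hP : x i < 0 ∧ (p : ℤ) ∣ x i
  · have hr0 : x i % p = 0 := Int.emod_eq_zero_of_dvd hP.2
    have hdneg : x i / p < 0 := Int.ediv_neg_of_neg_of_pos hP.1 hpz
    have hw : ((if 0 ≤ x i then x i / p else -(x i / p) - 1).toNat : ℤ) = -(x i / p) - 1 := by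
      rw [if_neg (not_le.mpr hP.1)]
      exact Int.toNat_of_nonneg (by omega)
    simp only [hP, and_self, not_true_eq_false, if_false]
    rw [hw]
    linear_combination hed - hr0
  · simp only [hP, not_false_eq_true, if_true]
    by_cases hx : 0 ≤ x i
    · have hd : 0 ≤ x i / p := Int.ediv_nonneg hx (le_of_lt hpz)
      simp only [hx, if_true]
      rw [if_neg (by omega : ¬ x i % (p : ℤ) < 0), Int.toNat_of_nonneg hd]
      linear_combination hed
    · push_neg at hx
      have hnd : ¬ (p : ℤ) ∣ x i := fun hc => hP ⟨hx, hc⟩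
      have h3 : x i % p ≠ 0 := fun hc => hnd (Int.dvd_of_emod_eq_zero hc)
      have hdneg : x i / p < 0 := Int.ediv_neg_of_neg_of_pos hx hpz
      simp only [not_le.mpr hx, if_false]
      rw [if_pos (by omega : x i % (p : ℤ) - p < 0),
        Int.toNat_of_nonneg (by omega : (0:ℤ) ≤ -(x i / p) - 1)]
      linear_combination hed

lemma exists_t (p m n k u s A : ℕ) (hp : 1 ≤ p) (hm : 1 ≤ m) (hk : k < p) (hu : u ≤ m)
    (hs : s ≤ (p - 1) * u) (heq : s + p * A = k + n * p) :
    ∃ t : ℕ, t < m ∧ s = k + t * p ∧ A + t = n := by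
  have hAn : A ≤ n := by
    by_contra hcon
    push_neg at hcon
    have h1 : p * (n + 1) ≤ p * A := Nat.mul_le_mul_left p hcon
    have h2 : p * (n + 1) = p * n + p := by ring
    have h3 : n * p = p * n := Nat.mul_comm n p
    omega
  have e1 : (n - A) * p + A * p = n * p := by
    rw [← Nat.add_mul]; congr 1; omega
  have e2 : p * A = A * p := Nat.mul_comm p A
  have e3 : s = k + (n - A) * p := by omega
  refine ⟨n - A, ?_, e3, by omega⟩
  have e4 : (p - 1) * u ≤ (p - 1) * m := Nat.mul_le_mul_left _ hu
  have e5 : p * m = (p - 1) * m + m := by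
    conv_lhs => rw [show p = (p - 1) + 1 by omega]
    rw [Nat.succ_mul]
  have e6 : (n - A) * p < m * p := by
    have e7 : m * p = p * m := Nat.mul_comm m p
    omega
  exact Nat.lt_of_mul_lt_mul_right e6

end Phi

/-- **Theorem (main formula).** For `k ∈ {0,…,p-1}` and `n ∈ ℕ`,
`N_𝓛(k+np) = ∑_{t=0}^{m-1} ∑_{U ⊆ M} binom(n-t+|U|-1, m-1) ⬝ γ(U, k+tp)`. -/
theorem NL_eq_sum_binom_gamma (p m : ℕ) (hp : 1 ≤ p) (hm : 1 ≤ m) (q : Fin m → ℤ)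
    (hq : ∀ i, IsCoprime (q i) (p : ℤ)) (k n : ℕ) (hk : k < p) :
    (OmegaSet p q Finset.univ (k + n * p)).ncard =
      ∑ t ∈ Finset.range m, ∑ U ∈ (Finset.univ : Finset (Fin m)).powerset,
        ibinom ((n : ℤ) - (t : ℤ) + (U.card : ℤ) - 1) (m - 1) *
          (CSet p q U (k + t * p)).ncard := by
  classical
  have hpz : 0 < p := hp
  set P : Finset (ℕ × Finset (Fin m)) :=
    Finset.range m ×ˢ (Finset.univ : Finset (Fin m)).powerset with hP
  set B : ℕ × Finset (Fin m) → Finset (Fin m → ℤ) := fun tU =>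
    ((CFin p q tU.2 (k + tU.1 * p)) ×ˢ WFin m tU.1 tU.2.card n).image (phiE p tU.2) with hB
  -- unpacking CFin membership
  have hCmem : ∀ (t : ℕ) (U : Finset (Fin m)) (c : Fin m → ℤ),
      c ∈ CFin p q U (k + t * p) →
      (∀ i, i ∉ U → c i = 0) ∧ ((p : ℤ) ∣ ∑ i ∈ U, q i * c i) ∧
        (∑ i ∈ U, (c i).natAbs = k + t * p) ∧ ∀ i ∈ U, |c i| < (p : ℤ) := by
    intro t U c hc
    obtain ⟨⟨h1, h2, h3⟩, h4⟩ := mem_CFin.mp hc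
    exact ⟨h1, h2, h3, h4⟩
  have hu_le : ∀ U : Finset (Fin m), U.card ≤ m := by
    intro U
    simpa using Finset.card_le_univ U
  -- forward inclusion: each image is inside Omega
  have hfwd : ∀ tU ∈ P, ∀ x ∈ B tU, x ∈ (omegaSet_finite p q Finset.univ (k + n * p)).toFinset := by
    rintro ⟨t, U⟩ htU x hx
    simp only [hB, Finset.mem_image] at hx
    obtain ⟨⟨c, w⟩, hcw, rfl⟩ := hx
    obtain ⟨hc, hw⟩ := Finset.mem_product.mp hcw
    obtain ⟨hsupp, hdvd, hnorm, hlt⟩ := hCmem t U c hc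
    have hWsum : (∑ i, w i) + (t + m) = n + U.card := mem_WFin.mp hw
    rw [Set.Finite.mem_toFinset]
    refine ⟨fun i hi => absurd (Finset.mem_univ i) hi, ?_, ?_⟩
    · have hsub := dvd_sum_phiE_sub (p := p) (U := U) q c w
      have := dvd_add hsub hdvd
      rwa [sub_add_cancel] at this
    · have hsum := sum_natAbs_phiE (p := p) (U := U) c w
      rw [hsum, hnorm]
      have he : t + ((∑ i, w i) + (m - U.card)) = n := by
        have := hu_le U; omega
      calc k + t * p + p * (∑ i, w i) + p * (m - U.card)
          = k + p * (t + ((∑ i, w i) + (m - U.card))) := by ring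
        _ = k + p * n := by rw [he]
        _ = k + n * p := by ring
  -- reverse inclusion
  have hbwd : ∀ x ∈ (omegaSet_finite p q Finset.univ (k + n * p)).toFinset,
      ∃ tU ∈ P, x ∈ B tU := by
    intro x hx
    rw [Set.Finite.mem_toFinset] at hx
    obtain ⟨-, hdvd, hnorm⟩ := hx
    set U : Finset (Fin m) :=
      Finset.univ.filter (fun j => ¬(x j < 0 ∧ (p : ℤ) ∣ x j)) with hU
    set c : Fin m → ℤ := fun i => if i ∈ U then sred p (x i) else 0 with hc
    set w : Fin m → ℕ :=
      fun i => (if 0 ≤ x i then x i / p else -(x i / p) - 1).toNat with hw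
    have hdec : phiE p U (c, w) = x := phiE_decomp hpz x
    have hlt : ∀ i ∈ U, |c i| < (p : ℤ) := by
      intro i hi
      rw [hc]
      dsimp only
      rw [if_pos hi]
      exact abs_sred_lt hpz (Finset.mem_filter.mp hi).2
    have h1 := sum_natAbs_phiE (p := p) (U := U) c w
    rw [hdec] at h1
    have hsum : (∑ i ∈ U, (c i).natAbs) + p * ((∑ i, w i) + (m - U.card)) = k + n * p := by
      rw [Nat.mul_add]
      omega
    have hs_le : (∑ i ∈ U, (c i).natAbs) ≤ (p - 1) * U.card := by
      have h1 : ∀ i ∈ U, (c i).natAbs ≤ p - 1 := by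
        intro i hi
        have h2 := hlt i hi
        rw [Int.abs_eq_natAbs] at h2
        have h3 : (c i).natAbs < p := by exact_mod_cast h2
        omega
      calc (∑ i ∈ U, (c i).natAbs) ≤ U.card • (p - 1) :=
            Finset.sum_le_card_nsmul U _ _ h1
        _ = (p - 1) * U.card := by rw [smul_eq_mul, Nat.mul_comm]
    obtain ⟨t, htm, hst, hAn⟩ :=
      exists_t p m n k U.card (∑ i ∈ U, (c i).natAbs) ((∑ i, w i) + (m - U.card))
        hp hm hk (hu_le U) hs_le hsum
    refine ⟨(t, U), ?_, ?_⟩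
    · rw [hP, Finset.mem_product]
      exact ⟨Finset.mem_range.mpr htm, Finset.mem_powerset.mpr (Finset.subset_univ U)⟩
    · rw [hB]
      dsimp only
      rw [Finset.mem_image]
      refine ⟨(c, w), Finset.mem_product.mpr ⟨?_, ?_⟩, hdec⟩
      · show c ∈ CFin p q U (k + t * p)
        rw [mem_CFin]
        refine ⟨⟨fun i hi => by rw [hc]; dsimp only; rw [if_neg hi], ?_, hst ▸ rfl⟩, hlt⟩
        have hsub := dvd_sum_phiE_sub (p := p) (U := U) q c w
        rw [hdec] at hsub
        have := dvd_sub hdvd hsub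
        rwa [sub_sub_cancel] at this
      · show w ∈ WFin m t U.card n
        rw [mem_WFin]
        have := hu_le U
        omega
  -- union equality
  have hkey : (omegaSet_finite p q Finset.univ (k + n * p)).toFinset = P.biUnion B := by
    ext x
    rw [Finset.mem_biUnion]
    constructor
    · exact hbwd x
    · rintro ⟨tU, htU, hx⟩
      exact hfwd tU htU x hx
  -- from a point of the image, recover the data
  have hrecover : ∀ (t : ℕ) (U : Finset (Fin m)) (c : Fin m → ℤ) (w : Fin m → ℕ),
      c ∈ CFin p q U (k + t * p) →
      (∀ i, (phiE p U (c, w) i < 0 ∧ (p : ℤ) ∣ phiE p U (c, w) i) ↔ i ∉ U) ∧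
      (∀ i ∈ U, sred p (phiE p U (c, w) i) = c i) := by
    intro t U c w hc
    obtain ⟨-, -, -, hlt⟩ := hCmem t U c hc
    exact ⟨phiE_neg_dvd_iff hpz hlt, fun i hi => sred_phiE hpz hlt hi⟩
  -- disjointness
  have hdisj : ∀ tU ∈ P, ∀ tU' ∈ P, tU ≠ tU' → Disjoint (B tU) (B tU') := by
    rintro ⟨t, U⟩ htU ⟨t', U'⟩ htU' hne
    rw [Finset.disjoint_left]
    rintro x hx hx'
    simp only [hB, Finset.mem_image] at hx hx'
    obtain ⟨⟨c, w⟩, hcw, hxe⟩ := hx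
    obtain ⟨⟨c', w'⟩, hcw', hxe'⟩ := hx'
    obtain ⟨hcm, hwm⟩ := Finset.mem_product.mp hcw
    obtain ⟨hcm', hwm'⟩ := Finset.mem_product.mp hcw'
    obtain ⟨hiff, hsred⟩ := hrecover t U c w hcm
    obtain ⟨hiff', hsred'⟩ := hrecover t' U' c' w' hcm'
    have hUU : U = U' := by
      ext i
      have h1 := hiff i
      have h2 := hiff' i
      rw [hxe] at h1
      rw [hxe'] at h2
      exact not_iff_not.mp (h1.symm.trans h2)
    subst hUU
    have hcc : c = c' := by
      funext i
      by_cases hi : i ∈ U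
      · have h1 := hsred i hi
        have h2 := hsred' i hi
        rw [hxe] at h1
        rw [hxe'] at h2
        rw [← h1, h2]
      · rw [(hCmem t U c hcm).1 i hi, (hCmem t' U c' hcm').1 i hi]
    have htt : t = t' := by
      have h1 := (hCmem t U c hcm).2.2.1
      have h2 := (hCmem t' U c' hcm').2.2.1
      rw [hcc] at h1
      rw [h1] at h2
      have : t * p = t' * p := by omega
      exact Nat.eq_of_mul_eq_mul_right hpz this
    exact hne (by rw [htt])
  -- injectivity on each piece
  have hinj : ∀ t U, Set.InjOn (phiE p U)
      ((CFin p q U (k + t * p) ×ˢ WFin m t U.card n : Finset _) : Set ((Fin m → ℤ) × (Fin m → ℕ))) := by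
    intro t U
    rintro ⟨c, w⟩ hcw ⟨c', w'⟩ hcw' heq
    rw [Finset.mem_coe, Finset.mem_product] at hcw hcw'
    obtain ⟨hcm, -⟩ := hcw
    obtain ⟨hcm', -⟩ := hcw'
    obtain ⟨-, hsred⟩ := hrecover t U c w hcm
    obtain ⟨-, hsred'⟩ := hrecover t U c' w' hcm'
    have hcc : c = c' := by
      funext i
      by_cases hi : i ∈ U
      · rw [← hsred i hi, heq, hsred' i hi]
      · rw [(hCmem t U c hcm).1 i hi, (hCmem t U c' hcm').1 i hi]
    subst hcc
    have hpzZ : ((p : ℤ)) ≠ 0 := by exact_mod_cast hpz.ne'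
    have hww : w = w' := by
      funext i
      have h1 := congrFun heq i
      unfold phiE at h1
      dsimp only at h1
      by_cases hi : i ∈ U
      · rw [if_pos hi, if_pos hi] at h1
        split_ifs at h1 with hcs
        · have h2 : (p : ℤ) * (w i : ℤ) = (p : ℤ) * (w' i : ℤ) := by linarith
          exact_mod_cast mul_left_cancel₀ hpzZ h2
        · have h2 : (p : ℤ) * (w i : ℤ) = (p : ℤ) * (w' i : ℤ) := by linarith
          exact_mod_cast mul_left_cancel₀ hpzZ h2
      · rw [if_neg hi, if_neg hi] at h1
        have h2 : (p : ℤ) * ((w i : ℤ) + 1) = (p : ℤ) * ((w' i : ℤ) + 1) := by linarith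
        have h3 := mul_left_cancel₀ hpzZ h2
        have : (w i : ℤ) = (w' i : ℤ) := by linarith
        exact_mod_cast this
    rw [hww]
  -- assemble
  rw [Set.ncard_eq_toFinset_card _ (omegaSet_finite p q Finset.univ (k + n * p)), hkey,
    Finset.card_biUnion hdisj]
  have hCcard : ∀ (t : ℕ) (U : Finset (Fin m)),
      (CSet p q U (k + t * p)).ncard = (CFin p q U (k + t * p)).card := fun t U =>
    Set.ncard_eq_toFinset_card _ _
  rw [hP]
  rw [Finset.sum_product]
  refine Finset.sum_congr rfl fun t ht => Finset.sum_congr rfl fun U hU => ?_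
  rw [hB]
  dsimp only
  rw [Finset.card_image_of_injOn (hinj t U), Finset.card_product, card_WFin hm,
    hCcard t U, Nat.mul_comm]
end

section
/- Let p, m ≥ 1 be natural numbers and q_1,…,q_m integers each coprime to p. Fix k ∈ {0,…,p−1}, n ∈ ℕ, a subset N ⊆ M, and let N̄ = M ∖ N. For every x ∈ Ω_N(k+np), the vector y = (x̄_j)_{j∈N̄} of signed reductions of the coordinates of x indexed by N̄ satisfies: (i) Σ_{j∈N̄} q_j y_j ≡ 0 (mod p); (ii) |y_j| < p for every j ∈ N̄; and (iii) ‖y‖₁ = k + tp for some integer t with 0 ≤ t ≤ n − |N|. In particular y ∈ C(N̄, k+tp) for some 0 ≤ t ≤ n − |N|. -/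
lemma sred_dvd_sub (p : ℕ) (x : ℤ) : (p : ℤ) ∣ x - sred p x := by
  unfold sred
  split_ifs with h
  · exact ⟨x / p, by rw [Int.emod_def]; ring⟩
  · exact ⟨x / p + 1, by rw [Int.emod_def]; ring⟩

lemma sred_abs_lt (p : ℕ) (hp : 1 ≤ p) (x : ℤ) (h : ¬(x < 0 ∧ (p : ℤ) ∣ x)) :
    |sred p x| < p := by
  have hp' : (0 : ℤ) < p := by exact_mod_cast hp
  have h1 : 0 ≤ x % p := Int.emod_nonneg x (by positivity)
  have h2 : x % p < p := Int.emod_lt_of_pos x hp'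
  unfold sred
  split_ifs with h0
  · rw [abs_of_nonneg h1]; exact h2
  · have hx : x < 0 := by omega
    have hnd : ¬ (p : ℤ) ∣ x := fun hd => h ⟨hx, hd⟩
    have hne : x % p ≠ 0 := by
      intro h0'
      exact hnd (Int.dvd_of_emod_eq_zero h0')
    rw [abs_of_neg (by omega)]
    omega

lemma sred_natAbs_decomp (p : ℕ) (hp : 1 ≤ p) (x : ℤ) :
    ∃ c : ℕ, x.natAbs = (sred p x).natAbs + c * p := by
  have hp' : (0 : ℤ) < p := by exact_mod_cast hp
  have hdm : p * (x / p) + x % p = x := Int.mul_ediv_add_emod x p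
  have h1 : 0 ≤ x % p := Int.emod_nonneg x (by positivity)
  have h2 : x % p < p := Int.emod_lt_of_pos x hp'
  unfold sred
  split_ifs with h0
  · refine ⟨(x / p).toNat, ?_⟩
    have hq : 0 ≤ x / p := Int.ediv_nonneg h0 hp'.le
    have key : (x.natAbs : ℤ) = ((x % p).natAbs : ℤ) + ((x / p).toNat : ℤ) * p := by
      rw [Int.natAbs_of_nonneg h0, Int.natAbs_of_nonneg h1, Int.toNat_of_nonneg hq]
      linarith
    exact_mod_cast key
  · push_neg at h0
    refine ⟨(-(x / p) - 1).toNat, ?_⟩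
    have hq : x / p < 0 := Int.ediv_neg_of_neg_of_pos h0 hp'
    have hs : x % p - p < 0 := by omega
    have key : (x.natAbs : ℤ) = ((x % p - p).natAbs : ℤ) + ((-(x / p) - 1).toNat : ℤ) * p := by
      rw [← Int.abs_eq_natAbs x, ← Int.abs_eq_natAbs (x % p - p),
        abs_of_neg h0, abs_of_neg hs, Int.toNat_of_nonneg (by omega : (0:ℤ) ≤ -(x / p) - 1)]
      linarith
    exact_mod_cast key

lemma dvd_neg_decomp (p : ℕ) (hp : 1 ≤ p) (x : ℤ) (hx : x < 0) (hd : (p : ℤ) ∣ x) :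
    ∃ d : ℕ, 1 ≤ d ∧ x.natAbs = d * p := by
  have hp' : (0 : ℤ) < p := by exact_mod_cast hp
  obtain ⟨e, he⟩ := hd
  have he' : e < 0 := by nlinarith
  refine ⟨(-e).toNat, by omega, ?_⟩
  have key : (x.natAbs : ℤ) = ((-e).toNat : ℤ) * p := by
    rw [Int.toNat_of_nonneg (by omega)]
    rw [← Int.abs_eq_natAbs x, abs_of_neg hx]
    linarith
  exact_mod_cast key

/-- **Lemma (the reduction map is well defined).** For `x ∈ Ω_N(k+np)`, the vector of
signed reductions of the coordinates of `x` indexed by `N̄ = M \ N` satisfies the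
congruence condition, has all coordinates of absolute value `< p`, and has 1-norm
`k + tp` for some `0 ≤ t ≤ n - |N|`; in particular it lies in `C(N̄, k+tp)`. -/
theorem sred_mem_CSet (p m : ℕ) (hp : 1 ≤ p) (hm : 1 ≤ m) (q : Fin m → ℤ)
    (hq : ∀ i, IsCoprime (q i) (p : ℤ)) (k n : ℕ) (hk : k < p)
    (N : Finset (Fin m)) (x : Fin m → ℤ) (hx : x ∈ OmegaN p q N k n) :
    ((p : ℤ) ∣ ∑ j ∈ Nᶜ, q j * sred p (x j)) ∧
      (∀ j ∈ Nᶜ, |sred p (x j)| < (p : ℤ)) ∧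
      ∃ t : ℕ, t + N.card ≤ n ∧
        ∑ j ∈ Nᶜ, (sred p (x j)).natAbs = k + t * p ∧
        (fun j => if j ∈ Nᶜ then sred p (x j) else 0) ∈ CSet p q Nᶜ (k + t * p) := by
  obtain ⟨⟨hsupp, hdvd, hnorm⟩, hmem⟩ := hx
  -- divisibility
  have hN : ∀ j ∈ N, x j < 0 ∧ (p : ℤ) ∣ x j := fun j hj => (hmem j).mpr hj
  have h1 : (p : ℤ) ∣ ∑ j ∈ N, q j * x j :=
    Finset.dvd_sum fun j hj => ((hN j hj).2).mul_left (q j)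
  have hsplit : ∑ j ∈ N, (fun j => q j * x j) j + ∑ j ∈ Nᶜ, (fun j => q j * x j) j
      = ∑ j, q j * x j := Finset.sum_add_sum_compl N _
  have h2 : (p : ℤ) ∣ ∑ j ∈ Nᶜ, q j * x j := by
    have : ∑ j ∈ Nᶜ, q j * x j = (∑ j, q j * x j) - ∑ j ∈ N, q j * x j := by
      simp only at hsplit; linarith
    rw [this]
    exact dvd_sub hdvd h1
  have h3 : (p : ℤ) ∣ ∑ j ∈ Nᶜ, q j * (x j - sred p (x j)) :=
    Finset.dvd_sum fun j _ => (sred_dvd_sub p (x j)).mul_left (q j)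
  have hdvdgoal : (p : ℤ) ∣ ∑ j ∈ Nᶜ, q j * sred p (x j) := by
    have heq : ∑ j ∈ Nᶜ, q j * sred p (x j)
        = (∑ j ∈ Nᶜ, q j * x j) - ∑ j ∈ Nᶜ, q j * (x j - sred p (x j)) := by
      rw [← Finset.sum_sub_distrib]
      exact Finset.sum_congr rfl fun j _ => by ring
    rw [heq]
    exact dvd_sub h2 h3
  -- bounds
  have hbound : ∀ j ∈ Nᶜ, |sred p (x j)| < (p : ℤ) := by
    intro j hj
    exact sred_abs_lt p hp (x j) (fun h => (Finset.mem_compl.mp hj) ((hmem j).mp h))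
  refine ⟨hdvdgoal, hbound, ?_⟩
  -- norm decomposition
  choose c hc using fun j => sred_natAbs_decomp p hp (x j)
  choose d hd using fun j (hj : j ∈ N) => dvd_neg_decomp p hp (x j) (hN j hj).1 (hN j hj).2
  have hsumN : ∑ j ∈ N, (x j).natAbs = (∑ j ∈ N.attach, d j.1 j.2) * p := by
    rw [Finset.sum_mul, ← Finset.sum_attach N fun j => (x j).natAbs]
    exact Finset.sum_congr rfl fun j _ => (hd j.1 j.2).2
  have hcardN : N.card ≤ ∑ j ∈ N.attach, d j.1 j.2 := by
    have := Finset.card_nsmul_le_sum N.attach (fun j => d j.1 j.2) 1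
      (fun j _ => (hd j.1 j.2).1)
    simpa using this
  have hsumC : ∑ j ∈ Nᶜ, (x j).natAbs
      = (∑ j ∈ Nᶜ, (sred p (x j)).natAbs) + (∑ j ∈ Nᶜ, c j) * p := by
    rw [Finset.sum_mul, ← Finset.sum_add_distrib]
    exact Finset.sum_congr rfl fun j _ => hc j
  have htot : ∑ j ∈ N, (x j).natAbs + ∑ j ∈ Nᶜ, (x j).natAbs = k + n * p := by
    rw [Finset.sum_add_sum_compl N (fun j => (x j).natAbs)]
    exact hnorm
  set S := ∑ j ∈ Nᶜ, (sred p (x j)).natAbs with hS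
  set C1 := ∑ j ∈ Nᶜ, c j with hC1
  set C2 := ∑ j ∈ N.attach, d j.1 j.2 with hC2
  have hkey : S + (C1 + C2) * p = k + n * p := by
    rw [add_mul]
    omega
  have hCn : C1 + C2 ≤ n := by
    by_contra hcon
    push_neg at hcon
    have : (n + 1) * p ≤ (C1 + C2) * p := Nat.mul_le_mul_right p hcon
    have h' : (n + 1) * p = n * p + p := by ring
    omega
  refine ⟨n - (C1 + C2), by omega, ?_, ?_⟩
  · have h1' : (n - (C1 + C2)) * p = n * p - (C1 + C2) * p := Nat.sub_mul n (C1 + C2) p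
    have h2' : (C1 + C2) * p ≤ n * p := Nat.mul_le_mul_right p hCn
    omega
  · refine ⟨⟨fun i hi => if_neg hi, ?_, ?_⟩, ?_⟩
    · have : ∑ j ∈ Nᶜ, q j * (if j ∈ Nᶜ then sred p (x j) else 0)
          = ∑ j ∈ Nᶜ, q j * sred p (x j) :=
        Finset.sum_congr rfl fun j hj => by rw [if_pos hj]
      rw [this]
      exact hdvdgoal
    · have heq : ∑ j ∈ Nᶜ, (if j ∈ Nᶜ then sred p (x j) else 0).natAbs = S :=
        Finset.sum_congr rfl fun j hj => by rw [if_pos hj]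
      rw [heq]
      have h1' : (n - (C1 + C2)) * p = n * p - (C1 + C2) * p := Nat.sub_mul n (C1 + C2) p
      have h2' : (C1 + C2) * p ≤ n * p := Nat.mul_le_mul_right p hCn
      omega
    · intro i hi
      simp only [if_pos hi]
      exact hbound i hi
end

section
/- Let p, m ≥ 1 be natural numbers and q_1,…,q_m integers each coprime to p. Fix k ∈ {0,…,p−1}, n ∈ ℕ, a subset N ⊆ M with N̄ = M ∖ N, and an integer t with 0 ≤ t ≤ n − |N|. Then for every y ∈ C(N̄, k+tp) there exists x ∈ Ω_N(k+np) whose signed reductions agree with y on N̄, i.e. x̄_j = y_j for all j ∈ N̄. In other words, the reduction map from Ω_N(k+np) to ⊔_{0≤t≤n−|N|} C(N̄, k+tp) is surjective. -/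
lemma sred_self (p : ℕ) (z : ℤ) (h1 : -p < z) (h2 : z < p) :
    sred p z = z := by
  unfold sred
  split
  · exact Int.emod_eq_of_lt ‹0 ≤ z› h2
  · have key : (z + p) % (p:ℤ) = z % p := by
      have := Int.add_mul_emod_self_left (a := z) (b := (p:ℤ)) (c := 1)
      simpa using this
    have h0 : (z + p) % (p:ℤ) = z + p := Int.emod_eq_of_lt (by omega) (by omega)
    omega

lemma sred_shift (p : ℕ) (hp : 1 ≤ p) (z : ℤ) (c : ℤ) (hc : 0 ≤ c)
    (h1 : -p < z) (h2 : z < p) :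
    sred p (z + (if 0 ≤ z then c * p else -(c * p))) = z := by
  have hcp : 0 ≤ c * p := mul_nonneg hc (by positivity)
  unfold sred
  split_ifs with h hs hs
  · -- z ≥ 0, z + c*p ≥ 0
    have key : (z + c * p) % (p:ℤ) = z % p := by
      have := Int.add_mul_emod_self_left (a := z) (b := (p:ℤ)) (c := c)
      simpa [mul_comm] using this
    rw [key]; exact Int.emod_eq_of_lt h h2
  · omega
  · omega
  · -- z < 0
    push_neg at h
    have key : (z + -(c * p)) % (p:ℤ) = z % p := by
      have := Int.add_mul_emod_self_left (a := z) (b := (p:ℤ)) (c := -c)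
      simpa [mul_comm] using this
    rw [key]
    have key2 : (z + p) % (p:ℤ) = z % p := by
      have := Int.add_mul_emod_self_left (a := z) (b := (p:ℤ)) (c := 1)
      simpa using this
    have h0 : (z + p) % (p:ℤ) = z + p := Int.emod_eq_of_lt (by omega) (by omega)
    omega

/-- **Lemma (surjectivity of the reduction map).** For `0 ≤ t ≤ n - |N|` and every
`y ∈ C(N̄, k+tp)` there is `x ∈ Ω_N(k+np)` whose signed reductions agree with `y`
on `N̄ = M \ N`. -/
theorem exists_preimage_sred (p m : ℕ) (hp : 1 ≤ p) (hm : 1 ≤ m) (q : Fin m → ℤ)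
    (hq : ∀ i, IsCoprime (q i) (p : ℤ)) (k n : ℕ) (hk : k < p)
    (N : Finset (Fin m)) (t : ℕ) (ht : t + N.card ≤ n)
    (y : Fin m → ℤ) (hy : y ∈ CSet p q Nᶜ (k + t * p)) :
    ∃ x ∈ OmegaN p q N k n, ∀ j ∈ Nᶜ, sred p (x j) = y j := by
  obtain ⟨⟨hy0, hydvd, hysum⟩, hylt⟩ := hy
  have hpz : (0:ℤ) < p := by exact_mod_cast hp
  -- coordinates outside N are never negative multiples of p
  have hnotneg : ∀ i ∈ Nᶜ, ¬(y i < 0 ∧ (p:ℤ) ∣ y i) := by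
    rintro i hi ⟨h1, h2⟩
    have hlt := hylt i hi
    rw [abs_lt] at hlt
    have := Int.le_of_dvd (by omega : (0:ℤ) < -y i) (dvd_neg.2 h2)
    omega
  rcases N.eq_empty_or_nonempty with hN | ⟨i0, hi0⟩
  · -- N = ∅
    subst hN
    simp only [Finset.compl_empty, Finset.mem_univ, true_implies, forall_true_left] at *
    set Rn : ℕ := (n - t) * p with hRn
    set s : ℤ := if 0 ≤ y ⟨0, hm⟩ then (Rn:ℤ) else -(Rn:ℤ) with hs
    have hpRn : (p:ℤ) ∣ (Rn:ℤ) := ⟨(n - t : ℕ), by push_cast [hRn]; ring⟩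
    have hps : (p:ℤ) ∣ s := by rw [hs]; split <;> simp [hpRn]
    set j0 : Fin m := ⟨0, hm⟩
    refine ⟨Function.update y j0 (y j0 + s), ⟨⟨fun i hi => absurd (Finset.mem_univ i) hi, ?_, ?_⟩, ?_⟩, ?_⟩
    · -- divisibility
      have hpt : ∀ i, q i * Function.update y j0 (y j0 + s) i
          = q i * y i + (if i = j0 then q j0 * s else 0) := by
        intro i
        by_cases h : i = j0
        · subst h; simp [Function.update_self]; ring
        · simp [Function.update_of_ne h, h]
      rw [Finset.sum_congr rfl (fun i _ => hpt i), Finset.sum_add_distrib,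
        Finset.sum_ite_eq' Finset.univ j0]
      simp only [Finset.mem_univ, if_true]
      exact dvd_add hydvd (Dvd.dvd.mul_left hps _)
    · -- 1-norm
      have hpt : ∀ i, (Function.update y j0 (y j0 + s) i).natAbs
          = (y i).natAbs + (if i = j0 then Rn else 0) := by
        intro i
        by_cases h : i = j0
        · subst h
          rw [Function.update_self, if_pos rfl]
          by_cases h0 : 0 ≤ y j0
          · rw [hs, if_pos h0]; omega
          · rw [hs, if_neg h0]; omega
        · simp [Function.update_of_ne h, h]
      rw [Finset.sum_congr rfl (fun i _ => hpt i), Finset.sum_add_distrib,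
        Finset.sum_ite_eq' Finset.univ j0]
      simp only [Finset.mem_univ, if_true, hysum, hRn]
      have : t + (n - t) = n := by
        have := Finset.card_empty (α := Fin m) ▸ ht; omega
      nlinarith [this]
    · -- sign condition
      intro i
      simp only [Finset.notMem_empty, iff_false]
      by_cases h : i = j0
      · subst h
        rintro ⟨h1, h2⟩
        simp only [Function.update_self] at h1 h2
        have h2' : (p:ℤ) ∣ y j0 := (dvd_add_right hps).mp (by rwa [add_comm] at h2)
        rw [hs] at h1
        have hRnn : (0:ℤ) ≤ Rn := Int.natCast_nonneg Rn
        split at h1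
        · exact hnotneg j0 ⟨by omega, h2'⟩
        · exact hnotneg j0 ⟨by omega, h2'⟩
      · rw [Function.update_of_ne h]
        exact hnotneg i
    · -- sred
      intro j
      by_cases h : j = j0
      · subst h
        rw [Function.update_self]
        have hlt := hylt j0
        rw [abs_lt] at hlt
        have hc : s = if 0 ≤ y j0 then ((n - t : ℕ):ℤ) * p else -(((n - t : ℕ):ℤ) * p) := by
          rw [hs, hRn]; push_cast; split <;> ring
        rw [hc]
        exact sred_shift p hp (y j0) ((n - t : ℕ):ℤ) (Int.natCast_nonneg _) hlt.1 hlt.2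
      · rw [Function.update_of_ne h]
        have hlt := hylt j
        rw [abs_lt] at hlt
        exact sred_self p (y j) hlt.1 hlt.2
  · -- N nonempty
    have hcard : 1 ≤ N.card := Finset.card_pos.2 ⟨i0, hi0⟩
    set A : ℕ := (n - t - N.card + 1) * p with hA
    set x : Fin m → ℤ := fun i => if i ∈ N then (if i = i0 then -(A:ℤ) else -(p:ℤ)) else y i with hx
    have hxc : ∀ i ∈ Nᶜ, x i = y i := by
      intro i hi; simp only [hx]; rw [if_neg (Finset.mem_compl.1 hi)]
    have hpA : (p:ℤ) ∣ (A:ℤ) := ⟨(n - t - N.card + 1 : ℕ), by push_cast [hA]; ring⟩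
    have hApos : 1 ≤ A := by
      have : 1 ≤ n - t - N.card + 1 := by omega
      calc 1 = 1 * 1 := by ring
      _ ≤ (n - t - N.card + 1) * p := Nat.mul_le_mul this hp
    refine ⟨x, ⟨⟨fun i hi => absurd (Finset.mem_univ i) hi, ?_, ?_⟩, ?_⟩, ?_⟩
    · -- divisibility
      rw [← Finset.sum_add_sum_compl N]
      refine dvd_add (Finset.dvd_sum fun i hi => ?_) ?_
      · have : (p:ℤ) ∣ x i := by
          simp only [hx]; rw [if_pos hi]; split
          · exact dvd_neg.mpr hpA
          · exact dvd_neg.mpr dvd_rfl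
        exact this.mul_left _
      · rw [Finset.sum_congr rfl (fun i hi => by rw [hxc i hi])]
        exact hydvd
    · -- 1-norm
      rw [← Finset.sum_add_sum_compl N]
      have h2 : ∑ i ∈ Nᶜ, (x i).natAbs = k + t * p := by
        rw [Finset.sum_congr rfl (fun i hi => by rw [hxc i hi])]; exact hysum
      have h1 : ∑ i ∈ N, (x i).natAbs = A + (N.card - 1) * p := by
        rw [← Finset.add_sum_erase N _ hi0]
        have e0 : (x i0).natAbs = A := by simp [hx, if_pos hi0]
        have e1 : ∀ i ∈ N.erase i0, (x i).natAbs = p := by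
          intro i hi
          rw [Finset.mem_erase] at hi
          simp [hx, if_pos hi.2, if_neg hi.1]
        rw [e0, Finset.sum_congr rfl e1, Finset.sum_const, Finset.card_erase_of_mem hi0,
          smul_eq_mul]
      rw [h1, h2, hA]
      have : (n - t - N.card + 1) + (N.card - 1) = n - t := by omega
      have h3 : (n - t - N.card + 1) * p + (N.card - 1) * p = (n - t) * p := by
        rw [← Nat.add_mul, this]
      have h4 : t * p + (n - t) * p = n * p := by
        rw [← Nat.add_mul]; congr 1; omega
      omega
    · -- sign condition
      intro i
      by_cases h : i ∈ N
      · simp only [hx, if_pos h, h, iff_true]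
        split
        · exact ⟨by exact_mod_cast neg_neg_iff_pos.2 (by exact_mod_cast hApos : (0:ℤ) < A), dvd_neg.mpr hpA⟩
        · exact ⟨by omega, dvd_neg.mpr dvd_rfl⟩
      · simp only [hx, if_neg h, h, iff_false]
        exact hnotneg i (Finset.mem_compl.2 h)
    · -- sred
      intro j hj
      rw [hxc j hj]
      have hlt := hylt j hj
      rw [abs_lt] at hlt
      exact sred_self p (y j) hlt.1 hlt.2
end

section
/- Let p, m ≥ 1 be natural numbers and q_1,…,q_m integers each coprime to p. Fix k ∈ {0,…,p−1}, n ∈ ℕ, a subset N ⊆ M with N̄ = M ∖ N, and an integer t with 0 ≤ t ≤ n − |N|. Then for every y ∈ C(N̄, k+tp), the set {x ∈ Ω_N(k+np) : x̄_j = y_j for all j ∈ N̄} has cardinality equal to the binomial coefficient binom(n−t+|N̄|−1, m−1) = binom(n−t−|N|+m−1, m−1). -/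
lemma card_tuple (m s : ℕ) (hm : 1 ≤ m) :
    {c : Fin m → ℕ | ∑ i, c i = s}.ncard = (s + m - 1).choose (m - 1) := by
  have h1 : m - 1 ≤ m + s - 1 := by omega
  have h2 := Nat.choose_symm h1
  have h3 : (m + s - 1) - (m - 1) = s := by omega
  have h5 : s + m - 1 = m + s - 1 := by omega
  rw [h3] at h2
  have h : Nat.card {c : Fin m → ℕ | ∑ i, c i = s} = Nat.card (Sym (Fin m) s) :=
    Nat.card_congr ((Sym.equivNatSumOfFintype (Fin m) s).symm)
  have h4 : Nat.card (Sym (Fin m) s) = (m + s - 1).choose s := by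
    rw [Nat.card_eq_fintype_card, Sym.card_sym_eq_choose, Fintype.card_fin]
  rw [← Nat.card_coe_set_eq, h, h4, h2, h5]

/-- The parametrization map of the fiber. -/
def Fmap (p : ℕ) {m : ℕ} (N : Finset (Fin m)) (y : Fin m → ℤ) (c : Fin m → ℕ) :
    Fin m → ℤ :=
  fun i => if i ∈ N then -(p:ℤ) * (c i + 1) else
    if 0 ≤ y i then y i + (p:ℤ) * c i else y i - (p:ℤ) * c i


/-- **Lemma (cardinality of the fibers).** For `0 ≤ t ≤ n - |N|` and
`y ∈ C(N̄, k+tp)`, the fiber `{x ∈ Ω_N(k+np) : x̄_j = y_j for all j ∈ N̄}` has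
cardinality `binom(n-t+|N̄|-1, m-1)`. -/
theorem fiber_card (p m : ℕ) (hp : 1 ≤ p) (hm : 1 ≤ m) (q : Fin m → ℤ)
    (hq : ∀ i, IsCoprime (q i) (p : ℤ)) (k n : ℕ) (hk : k < p)
    (N : Finset (Fin m)) (t : ℕ) (ht : t + N.card ≤ n)
    (y : Fin m → ℤ) (hy : y ∈ CSet p q Nᶜ (k + t * p)) :
    {x ∈ OmegaN p q N k n | ∀ j ∈ Nᶜ, sred p (x j) = y j}.ncard =
      ibinom ((n : ℤ) - (t : ℤ) + (Nᶜ.card : ℤ) - 1) (m - 1) := by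
  classical
  obtain ⟨⟨hy0, hydvd, hynorm⟩, hylt⟩ := hy
  have hp' : (0:ℤ) < p := by exact_mod_cast hp
  set s : ℕ := n - t - N.card with hs
  set F := Fmap p N y with hFdef
  set T : Set (Fin m → ℕ) := {c | ∑ i, c i = s} with hT
  -- absolute values of coordinates of F c
  have habsN : ∀ (c : Fin m → ℕ) i, i ∈ N → (F c i).natAbs = p * (c i + 1) := by
    intro c i hi
    have h : F c i = -((p * (c i + 1) : ℕ) : ℤ) := by
      simp only [hFdef, Fmap, if_pos hi]; push_cast; ring
    rw [h, Int.natAbs_neg, Int.natAbs_natCast]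
  have habsC : ∀ (c : Fin m → ℕ) i, i ∉ N → (F c i).natAbs = (y i).natAbs + p * c i := by
    intro c i hi
    by_cases h0 : 0 ≤ y i
    · have h : F c i = y i + ((p * c i : ℕ) : ℤ) := by
        simp only [hFdef, Fmap, if_neg hi, if_pos h0]; push_cast; ring
      rw [h]; generalize (p * c i : ℕ) = d; omega
    · have h : F c i = y i - ((p * c i : ℕ) : ℤ) := by
        simp only [hFdef, Fmap, if_neg hi, if_neg h0]; push_cast; ring
      rw [h]; generalize (p * c i : ℕ) = d; omega
  -- 1-norm of F c
  have hnorm : ∀ c : Fin m → ℕ,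
      ∑ i, (F c i).natAbs = (k + t * p) + (∑ i, c i + N.card) * p := by
    intro c
    rw [← Finset.sum_add_sum_compl N]
    have h1 : ∑ i ∈ N, (F c i).natAbs = ∑ i ∈ N, p * (c i + 1) :=
      Finset.sum_congr rfl fun i hi => habsN c i hi
    have h2 : ∑ i ∈ Nᶜ, (F c i).natAbs = ∑ i ∈ Nᶜ, ((y i).natAbs + p * c i) :=
      Finset.sum_congr rfl fun i hi => habsC c i (Finset.mem_compl.mp hi)
    rw [h1, h2, Finset.sum_add_distrib, hynorm]
    have h3 : ∑ i ∈ N, p * (c i + 1) = (∑ i ∈ N, p * c i) + N.card * p := by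
      simp [Nat.mul_add, Finset.sum_add_distrib, mul_comm]
    have h4 : (∑ i ∈ N, p * c i) + ∑ i ∈ Nᶜ, p * c i = p * ∑ i, c i := by
      rw [Finset.sum_add_sum_compl, Finset.mul_sum]
    have h5 : (∑ i, c i + N.card) * p = p * ∑ i, c i + N.card * p := by ring
    omega
  -- divisibility
  have hdvdF : ∀ c : Fin m → ℕ, (p:ℤ) ∣ ∑ i, q i * F c i := by
    intro c
    rw [← Finset.sum_add_sum_compl N]
    apply dvd_add
    · exact Finset.dvd_sum fun i hi =>
        ⟨q i * (-((c i : ℤ) + 1)), by simp only [hFdef, Fmap, if_pos hi]; ring⟩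
    · have h6 : ∑ i ∈ Nᶜ, q i * F c i
          = ∑ i ∈ Nᶜ, q i * y i + ∑ i ∈ Nᶜ, q i * (F c i - y i) := by
        rw [← Finset.sum_add_distrib]
        exact Finset.sum_congr rfl fun i _ => by ring
      rw [h6]
      refine dvd_add hydvd (Finset.dvd_sum fun i hi => ?_)
      have hi' : i ∉ N := Finset.mem_compl.mp hi
      by_cases h0 : 0 ≤ y i
      · exact ⟨q i * c i, by simp only [hFdef, Fmap, if_neg hi', if_pos h0]; ring⟩
      · exact ⟨-(q i * c i), by simp only [hFdef, Fmap, if_neg hi', if_neg h0]; ring⟩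
  -- sign condition
  have hsignF : ∀ c : Fin m → ℕ, ∀ i, (F c i < 0 ∧ (p:ℤ) ∣ F c i) ↔ i ∈ N := by
    intro c i
    by_cases hi : i ∈ N
    · have hF : F c i = -(p:ℤ) * ((c i : ℤ) + 1) := by
        simp only [hFdef, Fmap, if_pos hi]
      rw [hF]
      refine iff_of_true ⟨?_, ⟨-((c i : ℤ) + 1), by ring⟩⟩ hi
      exact mul_neg_of_neg_of_pos (by omega) (by positivity)
    · refine iff_of_false ?_ hi
      rintro ⟨hneg, hdvd'⟩
      by_cases h0 : 0 ≤ y i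
      · have hF : F c i = y i + (p:ℤ) * c i := by
          simp only [hFdef, Fmap, if_neg hi, if_pos h0]
        rw [hF] at hneg
        have : (0:ℤ) ≤ (p:ℤ) * c i := by positivity
        omega
      · have hF : F c i = y i - (p:ℤ) * c i := by
          simp only [hFdef, Fmap, if_neg hi, if_neg h0]
        rw [hF] at hneg hdvd'
        have hdy : (p:ℤ) ∣ y i := by
          have h8 : (p:ℤ) ∣ (p:ℤ) * c i := Dvd.intro _ rfl
          have h9 : y i = (y i - (p:ℤ) * c i) + (p:ℤ) * c i := by ring
          rw [h9]; exact dvd_add hdvd' h8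
        have h10 := Int.eq_zero_of_abs_lt_dvd hdy (hylt i (Finset.mem_compl.mpr hi))
        omega
  -- signed reduction
  have hsredF : ∀ c : Fin m → ℕ, ∀ j, j ∉ N → sred p (F c j) = y j := by
    intro c j hj
    have hlt := abs_lt.mp (hylt j (Finset.mem_compl.mpr hj))
    by_cases h0 : 0 ≤ y j
    · have hF : F c j = y j + (p:ℤ) * c j := by
        simp only [hFdef, Fmap, if_neg hj, if_pos h0]
      have hge : 0 ≤ F c j := by rw [hF]; positivity
      rw [sred, if_pos hge, hF, Int.add_mul_emod_self_left,
        Int.emod_eq_of_lt h0 hlt.2]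
    · have hF : F c j = y j - (p:ℤ) * c j := by
        simp only [hFdef, Fmap, if_neg hj, if_neg h0]
      have hcn : (0:ℤ) ≤ (p:ℤ) * c j := by positivity
      have hneg : ¬ (0 ≤ F c j) := by rw [hF]; omega
      have h1 : F c j = y j + (p:ℤ) * (-(c j : ℤ)) := by rw [hF]; ring
      have h2 : y j % (p:ℤ) = y j + p := by
        have h3 : (y j + (p:ℤ) * 1) % p = y j % p := Int.add_mul_emod_self_left (y j) (p:ℤ) 1
        rw [← h3, mul_one, Int.emod_eq_of_lt (by omega) (by omega)]
      rw [sred, if_neg hneg, h1, Int.add_mul_emod_self_left]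
      omega
  -- the fiber is the image of T under F
  have hSeq : {x ∈ OmegaN p q N k n | ∀ j ∈ Nᶜ, sred p (x j) = y j} = F '' T := by
    ext x
    constructor
    · rintro ⟨⟨⟨hsupp, hxdvd, hxnorm⟩, hxsign⟩, hxsred⟩
      set c : Fin m → ℕ := fun i =>
        if i ∈ N then (-(x i) / p - 1).toNat else ((x i - y i) / p).natAbs with hc
      have hFc : F c = x := by
        funext i
        by_cases hi : i ∈ N
        · obtain ⟨hneg, hdvd⟩ := (hxsign i).mpr hi
          obtain ⟨d, hd⟩ := hdvd
          have hd' : d < 0 := by nlinarith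
          have hdiv : -(x i) / p = -d := by
            rw [hd, show -((p:ℤ) * d) = (p:ℤ) * (-d) by ring,
              Int.mul_ediv_cancel_left _ (by positivity)]
          have hci : (c i : ℤ) = -d - 1 := by
            simp only [hc, if_pos hi, hdiv]
            rw [Int.toNat_of_nonneg (by omega)]
          simp only [hFdef, Fmap, if_pos hi, hci, hd]
          ring
        · have hsr := hxsred i (Finset.mem_compl.mpr hi)
          have hlt := abs_lt.mp (hylt i (Finset.mem_compl.mpr hi))
          by_cases hx0 : 0 ≤ x i
          · have hyv : y i = x i % p := by rw [sred, if_pos hx0] at hsr; omega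
            have hy0' : 0 ≤ y i := by
              rw [hyv]; exact Int.emod_nonneg _ (by positivity)
            have hsub : x i - y i = p * (x i / p) := by
              rw [hyv, Int.emod_def]; ring
            have hdiv : (x i - y i) / p = x i / p := by
              rw [hsub, Int.mul_ediv_cancel_left _ (by positivity)]
            have hdn : 0 ≤ x i / p := Int.ediv_nonneg hx0 (by positivity)
            have hci : (c i : ℤ) = x i / p := by
              simp only [hc, if_neg hi, hdiv]
              rw [Int.natAbs_of_nonneg hdn]
            simp only [hFdef, Fmap, if_neg hi, if_pos hy0', hci]
            omega
          · have hyv : y i = x i % p - p := by rw [sred, if_neg hx0] at hsr; omega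
            have hy0' : ¬ (0 ≤ y i) := by
              have := Int.emod_lt_of_pos (x i) hp'
              omega
            have hsub : x i - y i = p * (x i / p + 1) := by
              rw [hyv, Int.emod_def]; ring
            have hdiv : (x i - y i) / p = x i / p + 1 := by
              rw [hsub, Int.mul_ediv_cancel_left _ (by positivity)]
            have hdn : x i / p < 0 := Int.ediv_neg_of_neg_of_pos (by omega) hp'
            have hci : (c i : ℤ) = -(x i / p + 1) := by
              simp only [hc, if_neg hi, hdiv]
              omega
            simp only [hFdef, Fmap, if_neg hi, if_neg hy0', hci]
            linarith [hsub]
      refine ⟨c, ?_, hFc⟩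
      have he := hnorm c
      rw [hFc, hxnorm] at he
      have h7 : (t + (∑ i, c i + N.card)) * p = n * p := by
        rw [Nat.add_mul]; omega
      have h8 := Nat.eq_of_mul_eq_mul_right (by omega : 0 < p) h7
      simp only [hT, Set.mem_setOf_eq]
      omega
    · rintro ⟨c, hc, rfl⟩
      have hcs : ∑ i, c i = s := hc
      refine ⟨⟨⟨fun i hi => absurd (Finset.mem_univ i) hi, hdvdF c, ?_⟩, hsignF c⟩,
        fun j hj => hsredF c j (Finset.mem_compl.mp hj)⟩
      rw [hnorm c, hcs]
      have h7 : t + (s + N.card) = n := by omega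
      calc (k + t * p) + (s + N.card) * p = k + (t + (s + N.card)) * p := by ring
        _ = k + n * p := by rw [h7]
  -- injectivity
  have hinj : Set.InjOn F T := by
    intro c _ c' _ h
    funext i
    have hi := congrFun h i
    have hp0 : (p:ℤ) ≠ 0 := by positivity
    by_cases hN : i ∈ N
    · have h1 : -(p:ℤ) * ((c i : ℤ) + 1) = -(p:ℤ) * ((c' i : ℤ) + 1) := by
        simpa only [hFdef, Fmap, if_pos hN] using hi
      have h2 := mul_left_cancel₀ (neg_ne_zero.mpr hp0) h1
      omega
    · by_cases h0 : 0 ≤ y i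
      · have h1 : y i + (p:ℤ) * (c i) = y i + (p:ℤ) * (c' i) := by
          simpa only [hFdef, Fmap, if_neg hN, if_pos h0] using hi
        have h2 := mul_left_cancel₀ hp0 (by linarith : (p:ℤ) * (c i) = (p:ℤ) * (c' i))
        omega
      · have h1 : y i - (p:ℤ) * (c i) = y i - (p:ℤ) * (c' i) := by
          simpa only [hFdef, Fmap, if_neg hN, if_neg h0] using hi
        have h2 := mul_left_cancel₀ hp0 (by linarith : (p:ℤ) * (c i) = (p:ℤ) * (c' i))
        omega
  rw [hSeq, Set.ncard_image_of_injOn hinj, hT, card_tuple m s hm]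
  -- identify the binomial coefficient
  have hNle : N.card ≤ m := le_trans (Finset.card_le_univ N) (by simp)
  have hNc : (Nᶜ.card : ℤ) = (m : ℤ) - N.card := by
    rw [Finset.card_compl, Fintype.card_fin]; omega
  have harg : ((n : ℤ) - (t : ℤ) + (Nᶜ.card : ℤ) - 1) = ((s + m - 1 : ℕ) : ℤ) := by
    rw [hNc]; omega
  rw [harg]
  simp [ibinom]
end

section
/- Let p ≥ 1, m ≥ 2 be natural numbers with p even, and q_1,…,q_m integers each coprime to p. Then for every odd integer i ≥ 1, the number Σ_{s=0}^{⌊i/2⌋} binom(s+m−2, m−2) · N_𝓛(i−2s) is even. (This number is the dimension of the eigenspace of the eigenvalue λ_i = i(i+2m−2) of the Laplace–Beltrami operator on the lens space L(p;q_1,…,q_m), so for p even every odd-indexed eigenvalue has even multiplicity.) -/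
lemma neg_mem_omega {p m : ℕ} {q : Fin m → ℤ} {U : Finset (Fin m)} {k : ℕ}
    {x : Fin m → ℤ} (hx : x ∈ OmegaSet p q U k) : -x ∈ OmegaSet p q U k := by
  obtain ⟨h1, h2, h3⟩ := hx
  refine ⟨fun i hi => by simp [h1 i hi], ?_, by simpa using h3⟩
  have : ∑ i ∈ U, q i * (-x) i = -∑ i ∈ U, q i * x i := by
    simp
  rw [this]
  exact h2.neg_right

lemma even_ncard_omega {p m : ℕ} {q : Fin m → ℤ} {k : ℕ} (hk : Odd k) :
    Even (OmegaSet p q Finset.univ k).ncard := by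
  by_cases hS : (OmegaSet p q Finset.univ k).Finite
  · rw [Set.ncard_eq_toFinset_card _ hS]
    have h1 : ∏ _x ∈ hS.toFinset, (-1 : ℤ) = 1 := by
      refine Finset.prod_involution (fun a _ => -a) (by norm_num) (fun a ha _ => ?_)
        (fun a ha => ?_) (fun a ha => neg_neg a)
      · intro h
        have ha' : a ∈ OmegaSet p q Finset.univ k := hS.mem_toFinset.mp ha
        have haz : a = 0 := by
          funext j
          have := congrFun h j
          simp only [Pi.neg_apply] at this
          simp only [Pi.zero_apply]
          omega
        obtain ⟨_, _, h3⟩ := ha'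
        rw [haz] at h3
        simp at h3
        subst h3
        exact absurd hk (by decide)
      · exact hS.mem_toFinset.mpr (neg_mem_omega (hS.mem_toFinset.mp ha))
    rw [Finset.prod_const] at h1
    exact (neg_one_pow_eq_one_iff_even (by norm_num : (-1:ℤ) ≠ 1)).mp h1
  · rw [Set.Infinite.ncard hS]
    exact Even.zero

/-- **Corollary.** If `p` is even and `m ≥ 2`, then for every odd `i ≥ 1` the number
`∑_{s=0}^{⌊i/2⌋} binom(s+m-2, m-2) ⬝ N_𝓛(i-2s)` (the multiplicity of the eigenvalue
`λ_i = i(i+2m-2)` of the Laplace–Beltrami operator on `L(p;q₁,…,q_m)`) is even. -/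
theorem dim_eigenspace_even (p m : ℕ) (hp : 1 ≤ p) (hm : 2 ≤ m) (hpe : Even p)
    (q : Fin m → ℤ) (hq : ∀ i, IsCoprime (q i) (p : ℤ))
    (i : ℕ) (hi : Odd i) (hi1 : 1 ≤ i) :
    Even (∑ s ∈ Finset.range (i / 2 + 1),
      Nat.choose (s + m - 2) (m - 2) * (OmegaSet p q Finset.univ (i - 2 * s)).ncard) := by
  rw [even_iff_two_dvd]
  refine Finset.dvd_sum fun s hs => ?_
  refine Dvd.dvd.mul_left ?_ _
  rw [← even_iff_two_dvd]
  have hs2 := Finset.mem_range.mp hs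
  exact even_ncard_omega (by rw [Nat.odd_iff] at *; omega)
end
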